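/- LORD FDR control: if the null p-values are independent of each other and of the non-null p-values, each null p-value is super-uniform (P(P_j ≤ u) ≤ u for all u ∈ [0,1]), the level sequence {α_t} is monotone, and the LORD estimate satisfies FDP̂_LORD(t) := (Σ_{j ≤ t} α_j)/max(|R(t)|,1) ≤ α almost surely for all t ∈ ℕ, then FDR(t) ≤ α for all t ∈ ℕ. -/

import Mathlib

open MeasureTheory ProbabilityTheory

/-- The rejection indicator history available just before testing hypothesis `t`:
the indicators `R_j = 1{P_j ≤ α_j}` for `j < t`, encoded as a boolean sequence. -/
noncomputable def rejHistory {Ω : Type*} (P alpha : ℕ → Ω → ℝ) (t : ℕ) (ω : Ω) : ℕ → Bool :=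
  fun j => decide (j < t ∧ P j ω ≤ alpha j ω)

/-- The number of rejections `|R(t)|` among the hypotheses indexed `j ≤ t`. -/
noncomputable def numRejections {Ω : Type*} (P alpha : ℕ → Ω → ℝ) (t : ℕ) (ω : Ω) : ℝ :=
  ∑ j ∈ Finset.Iic t, if P j ω ≤ alpha j ω then (1 : ℝ) else 0

open Classical in
/-- The number of false rejections `|H⁰ ∩ R(t)|` among the hypotheses indexed `j ≤ t`. -/
noncomputable def numFalseRejections {Ω : Type*} (H0 : Set ℕ) (P alpha : ℕ → Ω → ℝ)
    (t : ℕ) (ω : Ω) : ℝ :=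
  ∑ j ∈ Finset.Iic t, if j ∈ H0 ∧ P j ω ≤ alpha j ω then (1 : ℝ) else 0

/-- The false discovery proportion `FDP(t) = |H⁰ ∩ R(t)| / max(|R(t)|, 1)`. -/
noncomputable def FDP {Ω : Type*} (H0 : Set ℕ) (P alpha : ℕ → Ω → ℝ) (t : ℕ) (ω : Ω) : ℝ :=
  numFalseRejections H0 P alpha t ω / max (numRejections P alpha t ω) 1

/-- The LORD FDP estimate `FDP̂_LORD(t) = (Σ_{j ≤ t} α_j) / max(|R(t)|, 1)`. -/
noncomputable def FDPhatLORD {Ω : Type*} (P alpha : ℕ → Ω → ℝ) (t : ℕ) (ω : Ω) : ℝ :=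
  (∑ j ∈ Finset.Iic t, alpha j ω) / max (numRejections P alpha t ω) 1

/-- The null p-values `{P_j : j ∈ H⁰}` are independent of each other and of
the non-null p-values: the family of σ-algebras consisting of `σ(P_j)` for each null `j`,
together with the σ-algebra generated by all non-null p-values, is independent. -/
def nullsIndep {Ω : Type*} [MeasurableSpace Ω] (μ : Measure Ω) (H0 : Set ℕ)
    (P : ℕ → Ω → ℝ) : Prop :=
  ProbabilityTheory.iIndep
    (fun i : Option {j : ℕ // j ∈ H0} =>
      i.elim (⨆ j ∈ H0ᶜ, MeasurableSpace.comap (P j) inferInstance)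
        (fun j => MeasurableSpace.comap (P j.1) inferInstance)) μ


/- ### Auxiliary development -/


noncomputable def rdet (f : ℕ → (ℕ → Bool) → ℝ) (Q : ℕ → ℝ) : ℕ → Bool
  | k => decide (Q k ≤ f k (fun i => if _ : i < k then rdet f Q i else false))

/-- the history function at time `k` -/
noncomputable def rhist (f : ℕ → (ℕ → Bool) → ℝ) (Q : ℕ → ℝ) (k : ℕ) : ℕ → Bool :=
  fun i => if i < k then rdet f Q i else false

lemma rdet_eq (f : ℕ → (ℕ → Bool) → ℝ) (Q : ℕ → ℝ) (k : ℕ) :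
    rdet f Q k = decide (Q k ≤ f k (rhist f Q k)) := by
  rw [rdet]
  have h : (fun i => if _ : i < k then rdet f Q i else false) = rhist f Q k := by
    funext i; unfold rhist
    rcases Nat.lt_or_ge i k with h | h
    · simp [h]
    · simp [Nat.not_lt.mpr h]
  rw [h]

lemma rdet_iff (f : ℕ → (ℕ → Bool) → ℝ) (Q : ℕ → ℝ) (k : ℕ) :
    rdet f Q k = true ↔ Q k ≤ f k (rhist f Q k) := by
  rw [rdet_eq]; simp

/-- `rdet` at `k` depends only on values `≤ k`. -/
lemma rdet_congr (f : ℕ → (ℕ → Bool) → ℝ) {Q Q' : ℕ → ℝ} :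
    ∀ k, (∀ i ≤ k, Q i = Q' i) → rdet f Q k = rdet f Q' k := by
  intro k
  induction k using Nat.strong_induction_on with
  | _ k ih =>
    intro h
    rw [rdet_eq, rdet_eq, h k le_rfl]
    have : rhist f Q k = rhist f Q' k := by
      funext i; unfold rhist; split
      · exact ih i (by omega) (fun i' hi' => h i' (by omega))
      · rfl
    rw [this]

lemma rhist_congr (f : ℕ → (ℕ → Bool) → ℝ) {Q Q' : ℕ → ℝ} (k : ℕ)
    (h : ∀ i < k, Q i = Q' i) : rhist f Q k = rhist f Q' k := by
  funext i; unfold rhist; split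
  · rename_i hik; rw [rdet_congr f i (fun i' hi' => h i' (by omega))]
  · rfl

/-- antitone: smaller p-values give more rejections -/
lemma rdet_antitone (f : ℕ → (ℕ → Bool) → ℝ) (hmono : ∀ t, Monotone (f t))
    {Q Q' : ℕ → ℝ} (h : ∀ i, Q' i ≤ Q i) :
    ∀ k, rdet f Q k = true → rdet f Q' k = true := by
  intro k
  induction k using Nat.strong_induction_on with
  | _ k ih =>
    intro hk
    rw [rdet_iff] at hk ⊢
    refine le_trans (le_trans (h k) hk) (hmono k ?_)
    intro i
    unfold rhist; split
    · rename_i hik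
      exact Bool.le_iff_imp.mpr (ih i hik)
    · exact le_rfl

/-- if `Q, Q'` agree off `j` and their rejections at `j` agree, all rejections agree. -/
lemma rdet_agree (f : ℕ → (ℕ → Bool) → ℝ) {Q Q' : ℕ → ℝ} {j : ℕ}
    (h : ∀ i, i ≠ j → Q i = Q' i) (hj : rdet f Q j = rdet f Q' j) :
    ∀ k, rdet f Q k = rdet f Q' k := by
  intro k
  induction k using Nat.strong_induction_on with
  | _ k ih =>
    rcases eq_or_ne k j with rfl | hkj
    · exact hj
    · rw [rdet_eq, rdet_eq, h k hkj]
      have : rhist f Q k = rhist f Q' k := by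
        funext i; unfold rhist; split
        · rename_i hik; rw [ih i hik]
        · rfl
      rw [this]

/-- The actual rejection process is determined by `rdet`. -/
lemma rdet_spec {Ω : Type*} (P alpha : ℕ → Ω → ℝ) (f : ℕ → (ℕ → Bool) → ℝ)
    (hpred : ∀ t ω, alpha t ω = f t (rejHistory P alpha t ω)) (ω : Ω) :
    ∀ k, alpha k ω = f k (rhist f (fun i => P i ω) k) ∧
      (rdet f (fun i => P i ω) k = true ↔ P k ω ≤ alpha k ω) := by
  intro k
  induction k using Nat.strong_induction_on with
  | _ k ih =>
    have hh : rejHistory P alpha k ω = rhist f (fun i => P i ω) k := by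
      funext i
      unfold rejHistory rhist
      split
      · rename_i hik
        simp only [hik, true_and, decide_eq_true_eq]
        rw [Bool.eq_iff_iff, decide_eq_true_eq]
        exact ((ih i hik).2).symm
      · rename_i hik
        simp [hik]
    have h1 : alpha k ω = f k (rhist f (fun i => P i ω) k) := by
      rw [hpred k ω, hh]
    exact ⟨h1, by rw [rdet_iff, h1]⟩

lemma measurable_bool' {Ω : Type*} {m : MeasurableSpace Ω} {g : Ω → Bool}
    (h : MeasurableSet[m] {ω | g ω = true}) : Measurable[m] g := by
  apply measurable_to_countable'
  rintro (_|_)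
  · have : g ⁻¹' {false} = {ω | g ω = true}ᶜ := by
      ext ω; simp
    rw [this]; exact h.compl
  · have : g ⁻¹' {true} = {ω | g ω = true} := by ext ω; simp
    rw [this]; exact h

lemma rdet_measurable {Ω : Type*} {m : MeasurableSpace Ω} (f : ℕ → (ℕ → Bool) → ℝ)
    (Q : ℕ → Ω → ℝ) (hQ : ∀ i, Measurable[m] (Q i)) :
    ∀ k, Measurable[m] (fun ω => rdet f (fun i => Q i ω) k) ∧
      Measurable[m] (fun ω => f k (rhist f (fun i => Q i ω) k)) := by
  intro k
  induction k using Nat.strong_induction_on with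
  | _ k ih =>
    have hf : Measurable[m] (fun ω => f k (rhist f (fun i => Q i ω) k)) := by
      have hrepr : (fun ω => f k (rhist f (fun i => Q i ω) k)) =
          (fun v : Fin k → Bool => f k (fun i => if h : i < k then v ⟨i, h⟩ else false)) ∘
            (fun ω (i : Fin k) => rdet f (fun i' => Q i' ω) i.1) := by
        funext ω
        simp only [Function.comp_apply]
        have he : rhist f (fun i => Q i ω) k =
            (fun i => if h : i < k then rdet f (fun i' => Q i' ω) i else false) := by
          funext i
          unfold rhist
          rcases Nat.lt_or_ge i k with h | h
          · simp [h]
          · simp [Nat.not_lt.mpr h]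
        rw [he]
      rw [hrepr]
      exact (measurable_of_countable _).comp
        (measurable_pi_lambda _ fun i => (ih i.1 i.2).1)
    refine ⟨?_, hf⟩
    apply measurable_bool'
    have : {ω | rdet f (fun i => Q i ω) k = true} =
        {ω | Q k ω ≤ f k (rhist f (fun i => Q i ω) k)} := by
      ext ω; exact rdet_iff f _ k
    rw [this]
    exact measurableSet_le (hQ k) hf

lemma key_lemma {Ω : Type*} [m0 : MeasurableSpace Ω] (μ : Measure Ω) [IsProbabilityMeasure μ]
    (P alpha : ℕ → Ω → ℝ) (H0 : Set ℕ)
    (hPmeas : ∀ j, Measurable (P j)) (hP01 : ∀ j ω, P j ω ∈ Set.Icc (0 : ℝ) 1)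
    (hameas : ∀ j, Measurable (alpha j)) (ha01 : ∀ j ω, alpha j ω ∈ Set.Ioo (0 : ℝ) 1)
    (hindep : nullsIndep μ H0 P)
    (hnull : ∀ j ∈ H0, ∀ u ∈ Set.Icc (0 : ℝ) 1, μ {ω | P j ω ≤ u} ≤ ENNReal.ofReal u)
    (f : ℕ → (ℕ → Bool) → ℝ)
    (hpred : ∀ t ω, alpha t ω = f t (rejHistory P alpha t ω))
    (hmono : ∀ t, Monotone (f t))
    (t j : ℕ) (hj : j ∈ H0) :
    ∫ ω, (if P j ω ≤ alpha j ω then (1:ℝ) else 0) / max (numRejections P alpha t ω) 1 ∂μ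
      ≤ ∫ ω, alpha j ω / max (numRejections P alpha t ω) 1 ∂μ := by
  classical
  set g : Ω → ℝ := fun ω => max (numRejections P alpha t ω) 1 with hg_def
  have spec := rdet_spec P alpha f hpred
  have hg1 : ∀ ω, (1:ℝ) ≤ g ω := fun ω => le_max_right _ _
  have hgpos : ∀ ω, (0:ℝ) < g ω := fun ω => lt_of_lt_of_le one_pos (hg1 ω)
  -- modified p-values: P with coordinate j replaced by 0
  set Q : ℕ → Ω → ℝ := fun i ω => if i = j then 0 else P i ω with hQ_def
  set Ntil : Ω → ℝ := fun ω =>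
    ∑ k ∈ Finset.Iic t, if rdet f (fun i => Q i ω) k = true then (1:ℝ) else 0 with hNtil_def
  set gtil : Ω → ℝ := fun ω => max (Ntil ω) 1 with hgtil_def
  have hgtil1 : ∀ ω, (1:ℝ) ≤ gtil ω := fun ω => le_max_right _ _
  have hgtilpos : ∀ ω, (0:ℝ) < gtil ω := fun ω => lt_of_lt_of_le one_pos (hgtil1 ω)
  -- the original count in terms of rdet
  have hN : ∀ ω, numRejections P alpha t ω =
      ∑ k ∈ Finset.Iic t, if rdet f (fun i => P i ω) k = true then (1:ℝ) else 0 := by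
    intro ω
    unfold numRejections
    refine Finset.sum_congr rfl fun k _ => ?_
    by_cases h : P k ω ≤ alpha k ω
    · rw [if_pos h, if_pos ((spec ω k).2.mpr h)]
    · rw [if_neg h, if_neg (fun hc => h ((spec ω k).2.mp hc))]
  -- g ≤ gtil everywhere
  have hgle : ∀ ω, g ω ≤ gtil ω := by
    intro ω
    refine max_le_max ?_ le_rfl
    rw [hN ω]
    refine Finset.sum_le_sum fun k _ => ?_
    by_cases h : rdet f (fun i => P i ω) k = true
    · rw [if_pos h, if_pos (rdet_antitone f hmono (fun i => by
        simp only [hQ_def]; split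
        · exact (hP01 i ω).1
        · exact le_rfl) k h)]
    · rw [if_neg h]; split <;> norm_num
  -- on the event, g = gtil
  have hEeq : ∀ ω, P j ω ≤ alpha j ω → g ω = gtil ω := by
    intro ω hE
    have hQag : ∀ i, i ≠ j → (fun i => P i ω) i = (fun i => Q i ω) i := by
      intro i hi; simp [hQ_def, hi]
    have hhist : rhist f (fun i => Q i ω) j = rhist f (fun i => P i ω) j :=
      rhist_congr f j (fun i hi => by simp [hQ_def, Nat.ne_of_lt hi])
    have hrQj : rdet f (fun i => Q i ω) j = true := by
      rw [rdet_iff, hhist]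
      simp only [hQ_def, if_pos rfl]
      rw [← (spec ω j).1]
      exact (ha01 j ω).1.le
    have hrPj : rdet f (fun i => P i ω) j = true := (spec ω j).2.mpr hE
    have hag : ∀ k, rdet f (fun i => P i ω) k = rdet f (fun i => Q i ω) k :=
      rdet_agree f hQag (hrPj.trans hrQj.symm)
    simp only [hg_def, hgtil_def, hN ω, hNtil_def]
    congr 1
    exact Finset.sum_congr rfl fun k _ => by rw [hag k]
  -- alpha j in terms of Q
  have halpha_repr : ∀ ω, alpha j ω = f j (rhist f (fun i => Q i ω) j) := by
    intro ω
    rw [(spec ω j).1]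
    congr 1
    exact (rhist_congr f j (fun i hi => by simp [hQ_def, Nat.ne_of_lt hi])).symm
  set W : Ω → ℝ × ℝ := fun ω => (alpha j ω, gtil ω) with hW_def
  have hpack : Measurable[m0] W ∧ Measurable[m0] gtil ∧ IndepFun (P j) W μ := by
  -- the sigma-algebra generated by the other p-values
    set fam : Option {i : ℕ // i ∈ H0} → MeasurableSpace Ω := fun i =>
      i.elim (⨆ k ∈ H0ᶜ, MeasurableSpace.comap (P k) inferInstance)
        (fun k => MeasurableSpace.comap (P k.1) inferInstance) with hfam_def
    have hfam_le : ∀ o, fam o ≤ m0 := by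
      rintro (_ | k)
      · exact iSup₂_le fun k _ => measurable_iff_comap_le.mp (hPmeas k)
      · exact measurable_iff_comap_le.mp (hPmeas k.1)
    set G : MeasurableSpace Ω :=
      ⨆ o ∈ ({some ⟨j, hj⟩} : Set (Option {i : ℕ // i ∈ H0}))ᶜ, fam o with hG_def
    have hGm0 : G ≤ m0 := iSup₂_le fun o _ => hfam_le o
    have hGP : ∀ i, i ≠ j → MeasurableSpace.comap (P i) inferInstance ≤ G := by
      intro i hi
      by_cases hiH : i ∈ H0
      · have : fam (some ⟨i, hiH⟩) ≤ G :=
          le_biSup fam (by simp [Subtype.ext_iff, hi])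
        exact this
      · have h1 : MeasurableSpace.comap (P i) inferInstance ≤
            ⨆ k ∈ H0ᶜ, MeasurableSpace.comap (P k) inferInstance :=
          le_biSup (fun k => MeasurableSpace.comap (P k) inferInstance)
            (Set.mem_compl hiH)
        exact le_trans h1 (le_biSup fam
          (show (none : Option {i : ℕ // i ∈ H0}) ∈
              ({some ⟨j, hj⟩} : Set (Option {i : ℕ // i ∈ H0}))ᶜ by
            simp))
    have hQG : ∀ i, Measurable[G] (Q i) := by
      intro i
      by_cases hi : i = j
      · subst hi; simp only [hQ_def, if_pos rfl]; exact measurable_const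
      · have : Measurable[G] (P i) := measurable_iff_comap_le.mpr (hGP i hi)
        simpa only [hQ_def, if_neg hi] using this
    have halphaG : Measurable[G] (alpha j) := by
      have := (rdet_measurable f Q hQG j).2
      have he : alpha j = fun ω => f j (rhist f (fun i => Q i ω) j) := funext halpha_repr
      rw [he]; exact this
    have hgtilG : Measurable[G] gtil := by
      have hNt : Measurable[G] Ntil := by
        rw [hNtil_def]
        refine Finset.measurable_sum _ fun k _ => ?_
        have hb := (rdet_measurable f Q hQG k).1
        exact Measurable.ite (hb (measurableSet_singleton true)) measurable_const measurable_const
      exact hNt.max measurable_const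
    have hWG : Measurable[G] W := halphaG.prodMk hgtilG
    have hWm0 : Measurable[m0] W := Measurable.mono (ma' := m0) hWG hGm0 le_rfl
    have hgtilm0 : Measurable[m0] gtil := Measurable.mono (ma' := m0) hgtilG hGm0 le_rfl
    -- independence
    have hindepJ : Indep (MeasurableSpace.comap (P j) inferInstance) G μ := by
      have h := indep_biSup_compl hfam_le hindep ({some ⟨j, hj⟩} : Set (Option {i : ℕ // i ∈ H0}))
      have hsingle : (⨆ o ∈ ({some ⟨j, hj⟩} : Set (Option {i : ℕ // i ∈ H0})), fam o)
          = MeasurableSpace.comap (P j) inferInstance := by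
        simp [hfam_def]
      rwa [hsingle] at h
    have hIndepFun : IndepFun (P j) W μ := by
      rw [IndepFun_iff_Indep]
      exact indep_of_indep_of_le_right hindepJ (measurable_iff_comap_le.mp hWG)
    exact ⟨hWm0, hgtilm0, hIndepFun⟩
  obtain ⟨hWm0, hgtilm0, hIndepFun⟩ := hpack
  -- measurability of g
  have hgm0 : Measurable[m0] g := by
    have : Measurable[m0] (fun ω => numRejections P alpha t ω) := by
      unfold numRejections
      refine Finset.measurable_sum _ fun k _ => ?_
      exact Measurable.ite (measurableSet_le (hPmeas k) (hameas k))
        measurable_const measurable_const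
    exact this.max measurable_const
  -- setup for the independence computation
  set X : Ω → ℝ := P j with hX_def
  haveI : IsProbabilityMeasure (μ.map X) := Measure.isProbabilityMeasure_map (hPmeas j).aemeasurable
  haveI : IsProbabilityMeasure (μ.map W) := Measure.isProbabilityMeasure_map hWm0.aemeasurable
  set φ : ℝ × ℝ × ℝ → ℝ := fun p => (if p.1 ≤ p.2.1 then (1:ℝ) else 0) / p.2.2 with hφ_def
  have hφm : Measurable φ := by
    refine Measurable.div ?_ measurable_snd.snd
    exact Measurable.ite (measurableSet_le measurable_fst measurable_snd.fst)
      measurable_const measurable_const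
  set Sset : Set (ℝ × ℝ) := {w | 0 ≤ w.1 ∧ w.1 ≤ 1 ∧ 1 ≤ w.2} with hS_def
  have hSm : MeasurableSet Sset := by
    rw [hS_def]
    simp only [Set.setOf_and]
    exact ((measurableSet_le measurable_const measurable_fst).inter
      ((measurableSet_le measurable_fst measurable_const).inter
        (measurableSet_le measurable_const measurable_snd)))
  have hWS : ∀ ω, W ω ∈ Sset := fun ω => ⟨(ha01 j ω).1.le, (ha01 j ω).2.le, hgtil1 ω⟩
  have hmap : μ.map (fun ω => (X ω, W ω)) = (μ.map X).prod (μ.map W) :=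
    (indepFun_iff_map_prod_eq_prod_map_map (hPmeas j).aemeasurable hWm0.aemeasurable).mp
      hIndepFun
  have haeW : ∀ᵐ w ∂(μ.map W), w ∈ Sset :=
    (ae_map_iff hWm0.aemeasurable hSm).mpr (Filter.Eventually.of_forall hWS)
  have hae2 : ∀ᵐ p ∂((μ.map X).prod (μ.map W)), p.2 ∈ Sset := by
    rw [ae_iff]
    have h1 : {p : ℝ × (ℝ × ℝ) | ¬ p.2 ∈ Sset} = Set.univ ×ˢ Ssetᶜ := by
      ext p; simp
    rw [h1, Measure.prod_prod]
    have h2 : (μ.map W) Ssetᶜ = 0 := by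
      rw [Measure.map_apply hWm0 hSm.compl]
      have : W ⁻¹' Ssetᶜ = ∅ := by
        ext ω; simp [hWS ω]
      simp [this]
    simp [h2]
  have hφint : Integrable φ ((μ.map X).prod (μ.map W)) := by
    refine Integrable.mono' (integrable_const 1) hφm.aestronglyMeasurable ?_
    filter_upwards [hae2] with p hp
    have h2 : (1:ℝ) ≤ p.2.2 := hp.2.2
    rw [Real.norm_eq_abs, hφ_def, abs_div]
    have hnum : |if p.1 ≤ p.2.1 then (1:ℝ) else 0| ≤ 1 := by split <;> simp
    have hb : (1:ℝ) ≤ |p.2.2| := le_trans h2 (le_abs_self _)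
    rw [div_le_one (by linarith)]
    exact le_trans hnum hb
  -- step 1 : the integral over the event with gtil as a product integral
  have step1 : ∫ ω, (if P j ω ≤ alpha j ω then (1:ℝ) else 0) / gtil ω ∂μ
      = ∫ p, φ p ∂((μ.map X).prod (μ.map W)) := by
    rw [← hmap, integral_map ((hPmeas j).prodMk hWm0).aemeasurable
      hφm.aestronglyMeasurable]
  have step2 : ∫ p, φ p ∂((μ.map X).prod (μ.map W))
      = ∫ w, ∫ x, φ (x, w) ∂(μ.map X) ∂(μ.map W) := integral_prod_symm φ hφint
  -- step 3 : inner integral bound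
  have step3 : ∀ w ∈ Sset, ∫ x, φ (x, w) ∂(μ.map X) ≤ w.1 / w.2 := by
    intro w hw
    obtain ⟨hw0, hw1, hw2⟩ := hw
    have hw2pos : (0:ℝ) < w.2 := by linarith
    have hinner : ∫ x, φ (x, w) ∂(μ.map X)
        = (∫ x, (if x ≤ w.1 then (1:ℝ) else 0) ∂(μ.map X)) / w.2 := by
      simp only [hφ_def]
      rw [integral_div]
    rw [hinner]
    have hind : (fun x : ℝ => if x ≤ w.1 then (1:ℝ) else 0)
        = Set.indicator (Set.Iic w.1) (1 : ℝ → ℝ) := by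
      funext x
      by_cases h : x ≤ w.1 <;> simp [Set.indicator, Set.mem_Iic, h]
    rw [hind, integral_indicator_one measurableSet_Iic]
    have hmeasle : (μ.map X) (Set.Iic w.1) ≤ ENNReal.ofReal w.1 := by
      rw [Measure.map_apply (hPmeas j) measurableSet_Iic]
      exact hnull j hj w.1 ⟨hw0, hw1⟩
    have htr : ((μ.map X) (Set.Iic w.1)).toReal ≤ w.1 :=
      ENNReal.toReal_le_of_le_ofReal hw0 hmeasle
    exact div_le_div_of_nonneg_right htr hw2pos.le
  -- integrability of the two w-functions
  have int1 : Integrable (fun w => ∫ x, φ (x, w) ∂(μ.map X)) (μ.map W) :=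
    hφint.integral_prod_right
  have int2 : Integrable (fun w : ℝ × ℝ => w.1 / w.2) (μ.map W) := by
    refine Integrable.mono' (integrable_const 1)
      (measurable_fst.div measurable_snd).aestronglyMeasurable ?_
    filter_upwards [haeW] with w hw
    obtain ⟨hw0, hw1, hw2⟩ := hw
    rw [Real.norm_eq_abs, abs_div, abs_of_nonneg hw0, abs_of_nonneg (by linarith : (0:ℝ) ≤ w.2)]
    rw [div_le_one (by linarith)]
    linarith
  have step4 : ∫ w, ∫ x, φ (x, w) ∂(μ.map X) ∂(μ.map W) ≤ ∫ w, w.1 / w.2 ∂(μ.map W) := by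
    refine integral_mono_ae int1 int2 ?_
    filter_upwards [haeW] with w hw
    exact step3 w hw
  have step5 : ∫ w, w.1 / w.2 ∂(μ.map W) = ∫ ω, alpha j ω / gtil ω ∂μ := by
    rw [integral_map (f := fun w : ℝ × ℝ => w.1 / w.2) hWm0.aemeasurable (measurable_fst.div measurable_snd).aestronglyMeasurable]
  -- step 6: change g to gtil on the event
  have step6 : ∫ ω, (if P j ω ≤ alpha j ω then (1:ℝ) else 0) / g ω ∂μ
      = ∫ ω, (if P j ω ≤ alpha j ω then (1:ℝ) else 0) / gtil ω ∂μ := by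
    refine integral_congr_ae (Filter.Eventually.of_forall fun ω => ?_)
    show (if P j ω ≤ alpha j ω then (1:ℝ) else 0) / g ω
        = (if P j ω ≤ alpha j ω then (1:ℝ) else 0) / gtil ω
    by_cases h : P j ω ≤ alpha j ω
    · rw [if_pos h, hEeq ω h]
    · rw [if_neg h, zero_div, zero_div]
  -- step 7: back from gtil to g
  have step7 : ∫ ω, alpha j ω / gtil ω ∂μ ≤ ∫ ω, alpha j ω / g ω ∂μ := by
    refine integral_mono ?_ ?_ ?_
    · refine Integrable.mono' (integrable_const 1)
        ((hameas j).div hgtilm0).aestronglyMeasurable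
        (Filter.Eventually.of_forall fun ω => ?_)
      rw [Real.norm_eq_abs, abs_div, abs_of_nonneg (ha01 j ω).1.le,
        abs_of_nonneg (hgtilpos ω).le, div_le_one (hgtilpos ω)]
      exact le_trans (ha01 j ω).2.le (hgtil1 ω)
    · refine Integrable.mono' (integrable_const 1)
        ((hameas j).div hgm0).aestronglyMeasurable
        (Filter.Eventually.of_forall fun ω => ?_)
      rw [Real.norm_eq_abs, abs_div, abs_of_nonneg (ha01 j ω).1.le,
        abs_of_nonneg (hgpos ω).le, div_le_one (hgpos ω)]
      exact le_trans (ha01 j ω).2.le (hg1 ω)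
    · intro ω
      exact div_le_div_of_nonneg_left (ha01 j ω).1.le (hgpos ω) (hgle ω)
  calc ∫ ω, (if P j ω ≤ alpha j ω then (1:ℝ) else 0) / g ω ∂μ
      = ∫ p, φ p ∂((μ.map X).prod (μ.map W)) := by rw [step6, step1]
    _ = ∫ w, ∫ x, φ (x, w) ∂(μ.map X) ∂(μ.map W) := step2
    _ ≤ ∫ w, w.1 / w.2 ∂(μ.map W) := step4
    _ = ∫ ω, alpha j ω / gtil ω ∂μ := step5
    _ ≤ ∫ ω, alpha j ω / g ω ∂μ := step7

/-- LORD FDR control: if the null p-values are independent of each other and of the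
non-nulls, each null p-value is super-uniform, the level sequence is monotone, and
`FDP̂_LORD(t) ≤ α` almost surely for all `t`, then `FDR(t) ≤ α` for all `t`. -/
theorem lord_fdr_control {Ω : Type*} [m0 : MeasurableSpace Ω]
    (μ : Measure Ω) [IsProbabilityMeasure μ]
    (P alpha : ℕ → Ω → ℝ) (H0 : Set ℕ)
    (hPmeas : ∀ j, Measurable (P j)) (hP01 : ∀ j ω, P j ω ∈ Set.Icc (0 : ℝ) 1)
    (hameas : ∀ j, Measurable (alpha j)) (ha01 : ∀ j ω, alpha j ω ∈ Set.Ioo (0 : ℝ) 1)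
    -- independence of the nulls from each other and from the non-nulls
    (hindep : nullsIndep μ H0 P)
    -- marginal super-uniformity of each null p-value
    (hnull : ∀ j ∈ H0, ∀ u ∈ Set.Icc (0 : ℝ) 1, μ {ω | P j ω ≤ u} ≤ ENNReal.ofReal u)
    -- predictability and monotonicity of the level sequence
    (f : ℕ → (ℕ → Bool) → ℝ)
    (hpred : ∀ t ω, alpha t ω = f t (rejHistory P alpha t ω))
    (hmono : ∀ t, Monotone (f t))
    -- target level and almost-sure control of the LORD FDP estimate
    (q : ℝ) (hq : q ∈ Set.Ioo (0 : ℝ) 1)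
    (hFDPhat : ∀ t : ℕ, ∀ᵐ ω ∂μ, FDPhatLORD P alpha t ω ≤ q)
    (t : ℕ) :
    ∫ ω, FDP H0 P alpha t ω ∂μ ≤ q := by
  classical
  set g : Ω → ℝ := fun ω => max (numRejections P alpha t ω) 1 with hg_def
  have hg1 : ∀ ω, (1:ℝ) ≤ g ω := fun ω => le_max_right _ _
  have hgpos : ∀ ω, (0:ℝ) < g ω := fun ω => lt_of_lt_of_le one_pos (hg1 ω)
  have hgm0 : Measurable g := by
    have : Measurable (fun ω => numRejections P alpha t ω) := by
      unfold numRejections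
      refine Finset.measurable_sum _ fun k _ => ?_
      exact Measurable.ite (measurableSet_le (hPmeas k) (hameas k))
        measurable_const measurable_const
    exact this.max measurable_const
  -- decompose FDP as a finite sum
  have hFDP : ∀ ω, FDP H0 P alpha t ω =
      ∑ k ∈ Finset.Iic t,
        (if k ∈ H0 ∧ P k ω ≤ alpha k ω then (1:ℝ) else 0) / g ω := by
    intro ω
    unfold FDP numFalseRejections
    rw [Finset.sum_div]
  -- integrability of each summand
  have hterm_meas : ∀ k, Measurable (fun ω =>
      (if k ∈ H0 ∧ P k ω ≤ alpha k ω then (1:ℝ) else 0) / g ω) := by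
    intro k
    refine Measurable.div ?_ hgm0
    by_cases hk : k ∈ H0
    · simp only [hk, true_and]
      exact Measurable.ite (measurableSet_le (hPmeas k) (hameas k))
        measurable_const measurable_const
    · simp only [hk, false_and, if_false]
      exact measurable_const
  have hterm_int : ∀ k, Integrable (fun ω =>
      (if k ∈ H0 ∧ P k ω ≤ alpha k ω then (1:ℝ) else 0) / g ω) μ := by
    intro k
    refine Integrable.mono' (integrable_const 1) (hterm_meas k).aestronglyMeasurable
      (Filter.Eventually.of_forall fun ω => ?_)
    rw [Real.norm_eq_abs, abs_div, abs_of_nonneg (hgpos ω).le, div_le_one (hgpos ω)]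
    refine le_trans ?_ (hg1 ω)
    split <;> simp
  have halpha_int : ∀ k, Integrable (fun ω => alpha k ω / g ω) μ := by
    intro k
    refine Integrable.mono' (integrable_const 1)
      ((hameas k).div hgm0).aestronglyMeasurable
      (Filter.Eventually.of_forall fun ω => ?_)
    rw [Real.norm_eq_abs, abs_div, abs_of_nonneg (ha01 k ω).1.le,
      abs_of_nonneg (hgpos ω).le, div_le_one (hgpos ω)]
    exact le_trans (ha01 k ω).2.le (hg1 ω)
  calc ∫ ω, FDP H0 P alpha t ω ∂μ
      = ∑ k ∈ Finset.Iic t, ∫ ω,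
          (if k ∈ H0 ∧ P k ω ≤ alpha k ω then (1:ℝ) else 0) / g ω ∂μ := by
        rw [← integral_finset_sum _ (fun k _ => hterm_int k)]
        exact integral_congr_ae (Filter.Eventually.of_forall fun ω => hFDP ω)
    _ ≤ ∑ k ∈ Finset.Iic t, ∫ ω, alpha k ω / g ω ∂μ := by
        refine Finset.sum_le_sum fun k _ => ?_
        by_cases hk : k ∈ H0
        · have heq : (fun ω => (if k ∈ H0 ∧ P k ω ≤ alpha k ω then (1:ℝ) else 0) / g ω)
              = fun ω => (if P k ω ≤ alpha k ω then (1:ℝ) else 0) / g ω := by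
            funext ω; simp [hk]
          rw [heq]
          exact key_lemma μ P alpha H0 hPmeas hP01 hameas ha01 hindep hnull f hpred hmono t k hk
        · have heq : (fun ω => (if k ∈ H0 ∧ P k ω ≤ alpha k ω then (1:ℝ) else 0) / g ω)
              = fun _ => (0:ℝ) := by
            funext ω; simp [hk]
          rw [heq, integral_zero]
          exact integral_nonneg fun ω => div_nonneg (ha01 k ω).1.le (hgpos ω).le
    _ = ∫ ω, FDPhatLORD P alpha t ω ∂μ := by
        rw [← integral_finset_sum _ (fun k _ => halpha_int k)]
        refine integral_congr_ae (Filter.Eventually.of_forall fun ω => ?_)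
        unfold FDPhatLORD
        rw [Finset.sum_div]
    _ ≤ q := by
        have hint : Integrable (fun ω => FDPhatLORD P alpha t ω) μ := by
          have hm : Measurable (fun ω => FDPhatLORD P alpha t ω) := by
            unfold FDPhatLORD
            exact (Finset.measurable_sum _ fun k _ => hameas k).div hgm0
          refine Integrable.mono' (integrable_const ((t:ℝ)+1)) hm.aestronglyMeasurable
            (Filter.Eventually.of_forall fun ω => ?_)
          unfold FDPhatLORD
          have hsum0 : (0:ℝ) ≤ ∑ k ∈ Finset.Iic t, alpha k ω :=
            Finset.sum_nonneg fun k _ => (ha01 k ω).1.le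
          have hsum1 : ∑ k ∈ Finset.Iic t, alpha k ω ≤ (t:ℝ)+1 := by
            calc ∑ k ∈ Finset.Iic t, alpha k ω ≤ ∑ k ∈ Finset.Iic t, (1:ℝ) :=
                  Finset.sum_le_sum fun k _ => (ha01 k ω).2.le
              _ = (t:ℝ)+1 := by simp [Nat.card_Iic]
          rw [Real.norm_eq_abs, abs_div, abs_of_nonneg hsum0, abs_of_nonneg (hgpos ω).le]
          calc (∑ k ∈ Finset.Iic t, alpha k ω) / g ω
              ≤ (∑ k ∈ Finset.Iic t, alpha k ω) / 1 := by
                exact div_le_div_of_nonneg_left hsum0 one_pos (hg1 ω)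
            _ ≤ (t:ℝ)+1 := by rw [div_one]; exact hsum1
        calc ∫ ω, FDPhatLORD P alpha t ω ∂μ ≤ ∫ _, q ∂μ :=
              integral_mono_ae hint (integrable_const q) (hFDPhat t)
          _ = q := by simp
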